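/- arXiv:1903.06447 — 2 statements merged into one kernel-verified Lean document; each statement's English description precedes it below -/
import Mathlib

section
/- Let n ≥ 1 and for i = 1,…,n let Fᵢ, Fᵢ′ ∈ ℝ and Gᵢ, Gᵢ′ > 0. Let P = ⊗ᵢ N(Fᵢ, Gᵢ²) and Q = ⊗ᵢ N(Fᵢ′, Gᵢ′²) be product Gaussian measures on ℝⁿ and Z = dQ/dP. Then for every z ∈ (0,1), ln ∫ Z^z dP = − Σᵢ (Fᵢ − Fᵢ′)² / ( 2( (1−z)^{-1} Gᵢ² + z^{-1} Gᵢ′² ) ) − Σᵢ ∫_{Gᵢ²}^{Gᵢ′²} (Gᵢ′² − x) / ( 2x( (1−z)^{-1} x + z^{-1} Gᵢ′² ) ) dx, the integrals being signed. -/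
open MeasureTheory ProbabilityTheory Real NNReal ENNReal


lemma aux_integral_pi_prod : ∀ {n : ℕ} (μ : Fin n → Measure ℝ), (∀ i, SigmaFinite (μ i)) →
    ∀ (f : Fin n → ℝ → ℝ),
    ∫ x, ∏ i, f i (x i) ∂(Measure.pi μ) = ∏ i, ∫ x, f i x ∂(μ i) := by
  intro n
  induction n with
  | zero =>
      intro μ _ f
      simp [integral_const, Measure.pi_univ, Measure.real]
  | succ n ih =>
      intro μ hσ f
      have : ∀ i, SigmaFinite (μ i) := hσ
      calc ∫ x, ∏ i, f i (x i) ∂(Measure.pi μ)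
          = ∫ x : ℝ × (Fin n → ℝ), f 0 x.1 * ∏ i : Fin n, f (Fin.succ i) (x.2 i)
              ∂((μ 0).prod (Measure.pi fun i => μ (Fin.succ i))) := by
            rw [← ((measurePreserving_piFinSuccAbove μ 0).symm).integral_comp']
            simp_rw [MeasurableEquiv.piFinSuccAbove_symm_apply, Fin.insertNthEquiv,
              Fin.prod_univ_succ, Fin.insertNth_zero, Equiv.coe_fn_mk, Fin.cons_succ,
              Fin.zero_succAbove, Fin.cons_zero, cast_eq]
        _ = (∫ x, f 0 x ∂(μ 0)) *
              ∏ i : Fin n, ∫ x, f (Fin.succ i) x ∂(μ (Fin.succ i)) := by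
            rw [← ih (fun i => μ (Fin.succ i)) (fun i => hσ _) (fun i => f (Fin.succ i)),
              ← integral_prod_mul]
        _ = ∏ i, ∫ x, f i x ∂(μ i) := by rw [Fin.prod_univ_succ]

lemma aux_integral_gaussianReal (m : ℝ) (v : ℝ≥0) (hv : v ≠ 0) (g : ℝ → ℝ) :
    ∫ x, g x ∂(gaussianReal m v) = ∫ x, gaussianPDFReal m v x * g x := by
  rw [gaussianReal_of_var_ne_zero _ hv]
  have : gaussianPDF m v = fun x => ((Real.toNNReal (gaussianPDFReal m v x) : ℝ≥0) : ℝ≥0∞) := rfl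
  rw [this, integral_withDensity_eq_integral_smul
    ((measurable_gaussianPDFReal m v).real_toNNReal) g]
  congr 1
  ext x
  simp [NNReal.smul_def, Real.coe_toNNReal _ (gaussianPDFReal_nonneg _ _ _)]


lemma aux_intervalE (u1 u2 z : ℝ) (h1 : 0 < u1) (h2 : 0 < u2) (hz0 : 0 < z) (hz1 : z < 1) :
    ∫ x in u1..u2, (u2 - x) / (2 * x * ((1 - z)⁻¹ * x + z⁻¹ * u2)) =
      (z / 2 * Real.log u2 - 1 / 2 * Real.log ((1 - z)⁻¹ * u2 + z⁻¹ * u2)) -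
      (z / 2 * Real.log u1 - 1 / 2 * Real.log ((1 - z)⁻¹ * u1 + z⁻¹ * u2)) := by
  have hz1' : 0 < 1 - z := by linarith
  have hmem : ∀ x ∈ Set.uIcc u1 u2, 0 < x := by
    intro x hx
    have := hx.1
    rcases le_total u1 u2 with h | h
    · rw [Set.uIcc_of_le h] at hx; linarith [hx.1]
    · rw [Set.uIcc_of_ge h] at hx; linarith [hx.1]
  have hden : ∀ x : ℝ, 0 < x → 0 < (1 - z)⁻¹ * x + z⁻¹ * u2 := by
    intro x hx; positivity
  have hderiv : ∀ x ∈ Set.uIcc u1 u2,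
      HasDerivAt (fun t => z / 2 * Real.log t - 1 / 2 * Real.log ((1 - z)⁻¹ * t + z⁻¹ * u2))
        ((u2 - x) / (2 * x * ((1 - z)⁻¹ * x + z⁻¹ * u2))) x := by
    intro x hx
    have hxpos := hmem x hx
    have hd := hden x hxpos
    have hA : HasDerivAt (fun t : ℝ => z / 2 * Real.log t) (z / 2 * x⁻¹) x :=
      (Real.hasDerivAt_log hxpos.ne').const_mul _
    have hlin : HasDerivAt (fun t : ℝ => (1 - z)⁻¹ * t + z⁻¹ * u2) ((1 - z)⁻¹) x := by
      simpa using ((hasDerivAt_id x).const_mul ((1 - z)⁻¹)).add_const (z⁻¹ * u2)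
    have hB : HasDerivAt (fun t : ℝ => 1 / 2 * Real.log ((1 - z)⁻¹ * t + z⁻¹ * u2))
        (1 / 2 * ((1 - z)⁻¹ / ((1 - z)⁻¹ * x + z⁻¹ * u2))) x :=
      (hlin.log hd.ne').const_mul _
    refine (hA.sub hB).congr_deriv ?_
    have hx0 := hxpos.ne'
    have hz0' := hz1'.ne'
    have hN : 0 < z * x + (1 - z) * u2 := by positivity
    have hE : (1 - z)⁻¹ * x + z⁻¹ * u2 = (z * x + (1 - z) * u2) / (z * (1 - z)) := by
      field_simp
    rw [hE]
    field_simp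
    ring
  have hcont : ContinuousOn (fun x => (u2 - x) / (2 * x * ((1 - z)⁻¹ * x + z⁻¹ * u2)))
      (Set.uIcc u1 u2) := by
    apply ContinuousOn.div
    · fun_prop
    · fun_prop
    · intro x hx
      have hxpos := hmem x hx
      have hd := hden x hxpos
      positivity
  exact intervalIntegral.integral_eq_sub_of_hasDerivAt hderiv (hcont.intervalIntegrable)

lemma aux_quad (m1 m2 s1 s2 z : ℝ) (hs1 : 0 < s1) (hs2 : 0 < s2) (hz0 : 0 < z) (hz1 : z < 1)
    (x : ℝ) :
    (-(x - m1) ^ 2 / (2 * s1 ^ 2)) +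
      ((-(x - m2) ^ 2 / (2 * s2 ^ 2)) - (-(x - m1) ^ 2 / (2 * s1 ^ 2))) * z =
    -(((z * s1 ^ 2 + (1 - z) * s2 ^ 2) / (s1 ^ 2 * s2 ^ 2) / 2) *
        (x - ((1 - z) / s1 ^ 2 * m1 + z / s2 ^ 2 * m2) / ((1 - z) / s1 ^ 2 + z / s2 ^ 2)) ^ 2)
      - (m1 - m2) ^ 2 / (2 * ((1 - z)⁻¹ * s1 ^ 2 + z⁻¹ * s2 ^ 2)) := by
  have h1 : s1 ^ 2 ≠ 0 := by positivity
  have h2 : s2 ^ 2 ≠ 0 := by positivity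
  have hz : z ≠ 0 := hz0.ne'
  have hz1' : (1 : ℝ) - z ≠ 0 := by intro h; linarith [(sub_eq_zero.mp h)]
  have hd1 : (1 - z) / s1 ^ 2 + z / s2 ^ 2 ≠ 0 := by
    have : 0 < (1 - z) / s1 ^ 2 + z / s2 ^ 2 := by
      have : 0 < 1 - z := by linarith
      positivity
    exact this.ne'
  have hd2 : (1 - z)⁻¹ * s1 ^ 2 + z⁻¹ * s2 ^ 2 ≠ 0 := by
    have : 0 < (1 - z)⁻¹ * s1 ^ 2 + z⁻¹ * s2 ^ 2 := by
      have : 0 < 1 - z := by linarith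
      positivity
    exact this.ne'
  have hz1p : (0:ℝ) < 1 - z := by linarith
  have hN : z * s1 ^ 2 + (1 - z) * s2 ^ 2 ≠ 0 := by positivity
  have hN' : s2 ^ 2 - s2 ^ 2 * z + s1 ^ 2 * z ≠ 0 := by
    have h : s2 ^ 2 - s2 ^ 2 * z + s1 ^ 2 * z = z * s1 ^ 2 + (1 - z) * s2 ^ 2 := by ring
    rw [h]; exact hN
  field_simp
  ring

lemma aux_oneDim (m1 m2 s1 s2 z : ℝ) (hs1 : 0 < s1) (hs2 : 0 < s2)
    (hz0 : 0 < z) (hz1 : z < 1) :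
    ∫ x, (gaussianPDFReal m2 ⟨s2 ^ 2, sq_nonneg s2⟩ x /
        gaussianPDFReal m1 ⟨s1 ^ 2, sq_nonneg s1⟩ x) ^ z
        ∂(gaussianReal m1 ⟨s1 ^ 2, sq_nonneg s1⟩)
    = Real.exp (-((m1 - m2) ^ 2 / (2 * ((1 - z)⁻¹ * s1 ^ 2 + z⁻¹ * s2 ^ 2)))
        - ∫ x in (s1 ^ 2)..(s2 ^ 2),
            (s2 ^ 2 - x) / (2 * x * ((1 - z)⁻¹ * x + z⁻¹ * s2 ^ 2))) := by
  have hz1p : (0:ℝ) < 1 - z := by linarith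
  have h1 : (0:ℝ) < s1 ^ 2 := by positivity
  have h2 : (0:ℝ) < s2 ^ 2 := by positivity
  have hv1 : (⟨s1 ^ 2, sq_nonneg s1⟩ : ℝ≥0) ≠ 0 := by
    intro h
    have := congrArg (fun t : ℝ≥0 => (t : ℝ)) h
    have h0 : s1 ^ 2 = 0 := this
    exact hs1.ne' (pow_eq_zero_iff two_ne_zero |>.mp h0)
  -- abbreviations
  set c1 : ℝ := (√(2 * π * s1 ^ 2))⁻¹ with hc1
  set c2 : ℝ := (√(2 * π * s2 ^ 2))⁻¹ with hc2
  set D : ℝ := (m1 - m2) ^ 2 / (2 * ((1 - z)⁻¹ * s1 ^ 2 + z⁻¹ * s2 ^ 2)) with hD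
  set k : ℝ := (z * s1 ^ 2 + (1 - z) * s2 ^ 2) / (s1 ^ 2 * s2 ^ 2) / 2 with hk
  set c : ℝ := ((1 - z) / s1 ^ 2 * m1 + z / s2 ^ 2 * m2) / ((1 - z) / s1 ^ 2 + z / s2 ^ 2)
    with hcc
  have hc1p : 0 < c1 := by rw [hc1]; positivity
  have hc2p : 0 < c2 := by rw [hc2]; positivity
  have hNpos : 0 < z * s1 ^ 2 + (1 - z) * s2 ^ 2 := by positivity
  have hkpos : 0 < k := by rw [hk]; positivity
  have hpdf : ∀ (m s : ℝ), 0 < s → ∀ x : ℝ,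
      gaussianPDFReal m ⟨s ^ 2, sq_nonneg s⟩ x =
      Real.exp (Real.log ((√(2 * π * s ^ 2))⁻¹) + (-(x - m) ^ 2 / (2 * s ^ 2))) := by
    intro m s hs x
    unfold gaussianPDFReal
    rw [Real.exp_add, Real.exp_log (by positivity)]
    norm_num
    rfl
  rw [aux_integral_gaussianReal _ _ hv1]
  have hintegrand : ∀ x : ℝ,
      gaussianPDFReal m1 ⟨s1 ^ 2, sq_nonneg s1⟩ x *
      (gaussianPDFReal m2 ⟨s2 ^ 2, sq_nonneg s2⟩ x /
        gaussianPDFReal m1 ⟨s1 ^ 2, sq_nonneg s1⟩ x) ^ z =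
      Real.exp ((1 - z) * Real.log c1 + z * Real.log c2 - D) *
        Real.exp (-(k * (x - c) ^ 2)) := by
    intro x
    rw [hpdf m1 s1 hs1, hpdf m2 s2 hs2, ← Real.exp_sub, ← Real.exp_mul, ← Real.exp_add,
      ← Real.exp_add]
    congr 1
    have hq := aux_quad m1 m2 s1 s2 z hs1 hs2 hz0 hz1 x
    rw [← hk, ← hcc, ← hD] at hq
    rw [← hc1, ← hc2]
    linear_combination hq
  simp_rw [hintegrand]
  rw [integral_const_mul]
  have hgauss : ∫ x : ℝ, Real.exp (-(k * (x - c) ^ 2)) = √(π / k) := by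
    have h := integral_gaussian k
    simp_rw [neg_mul] at h
    rw [← h]
    exact integral_sub_right_eq_self (μ := volume) (fun a : ℝ => Real.exp (-(k * a ^ 2))) c
  rw [hgauss]
  rw [aux_intervalE _ _ z h1 h2 hz0 hz1]
  have hsq : √(π / k) = Real.exp (Real.log (√(π / k))) := by
    rw [Real.exp_log (by positivity)]
  rw [hsq, ← Real.exp_add]
  congr 1
  -- now a pure log identity
  have hpik : π / k = 2 * π * s1 ^ 2 * s2 ^ 2 / (z * s1 ^ 2 + (1 - z) * s2 ^ 2) := by
    rw [hk]; field_simp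
  have e1 : Real.log c1 = -(1 / 2) * Real.log (2 * π * s1 ^ 2) := by
    rw [hc1, Real.log_inv, Real.log_sqrt (by positivity)]; ring
  have e2 : Real.log c2 = -(1 / 2) * Real.log (2 * π * s2 ^ 2) := by
    rw [hc2, Real.log_inv, Real.log_sqrt (by positivity)]; ring
  have e3 : Real.log (√(π / k)) = 1 / 2 * Real.log (2 * π * s1 ^ 2 * s2 ^ 2 /
      (z * s1 ^ 2 + (1 - z) * s2 ^ 2)) := by
    rw [Real.log_sqrt (by positivity), hpik]; ring
  have l1 : Real.log (2 * π * s1 ^ 2) = Real.log (2 * π) + Real.log (s1 ^ 2) := by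
    rw [Real.log_mul (by positivity) (by positivity)]
  have l2 : Real.log (2 * π * s2 ^ 2) = Real.log (2 * π) + Real.log (s2 ^ 2) := by
    rw [Real.log_mul (by positivity) (by positivity)]
  have l3 : Real.log (2 * π * s1 ^ 2 * s2 ^ 2 / (z * s1 ^ 2 + (1 - z) * s2 ^ 2)) =
      Real.log (2 * π) + Real.log (s1 ^ 2) + Real.log (s2 ^ 2) -
        Real.log (z * s1 ^ 2 + (1 - z) * s2 ^ 2) := by
    rw [Real.log_div (by positivity) (by positivity),
      Real.log_mul (by positivity) (by positivity),
      Real.log_mul (by positivity) (by positivity)]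
  have l4 : Real.log ((1 - z)⁻¹ * s2 ^ 2 + z⁻¹ * s2 ^ 2) =
      Real.log (s2 ^ 2) - Real.log (z * (1 - z)) := by
    have h : (1 - z)⁻¹ * s2 ^ 2 + z⁻¹ * s2 ^ 2 = s2 ^ 2 / (z * (1 - z)) := by
      field_simp; ring
    rw [h, Real.log_div (by positivity) (by positivity)]
  have l5 : Real.log ((1 - z)⁻¹ * s1 ^ 2 + z⁻¹ * s2 ^ 2) =
      Real.log (z * s1 ^ 2 + (1 - z) * s2 ^ 2) - Real.log (z * (1 - z)) := by
    have h : (1 - z)⁻¹ * s1 ^ 2 + z⁻¹ * s2 ^ 2 =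
        (z * s1 ^ 2 + (1 - z) * s2 ^ 2) / (z * (1 - z)) := by
      field_simp
    rw [h, Real.log_div (by positivity) (by positivity)]
  rw [e1, e2, e3, l1, l2, l3, l4, l5]
  ring

/-- For product Gaussian measures `P = ⊗ᵢ N(Fᵢ,Gᵢ²)`,
`Q = ⊗ᵢ N(Fᵢ′,Gᵢ′²)` on `ℝⁿ` and likelihood ratio `Z = dQ/dP` (the product of the
coordinatewise density ratios), for every `z ∈ (0,1)`:
`ln ∫ Z^z dP = −Σᵢ (Fᵢ−Fᵢ′)²/(2((1−z)⁻¹Gᵢ² + z⁻¹Gᵢ′²))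
  − Σᵢ ∫_{Gᵢ²}^{Gᵢ′²} (Gᵢ′²−x)/(2x((1−z)⁻¹x + z⁻¹Gᵢ′²)) dx` (signed integrals). -/
theorem stmt_12 (n : ℕ) (hn : 1 ≤ n) (F F' : Fin n → ℝ) (G G' : Fin n → ℝ)
    (hG : ∀ i, 0 < G i) (hG' : ∀ i, 0 < G' i)
    (P : Measure (Fin n → ℝ))
    (hP : P = Measure.pi (fun i => gaussianReal (F i) ⟨G i ^ 2, sq_nonneg (G i)⟩))
    (Z : (Fin n → ℝ) → ℝ)
    (hZ : Z = fun y => ∏ i, gaussianPDFReal (F' i) ⟨G' i ^ 2, sq_nonneg (G' i)⟩ (y i) /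
        gaussianPDFReal (F i) ⟨G i ^ 2, sq_nonneg (G i)⟩ (y i))
    (z : ℝ) (hz0 : 0 < z) (hz1 : z < 1) :
    Real.log (∫ y, Z y ^ z ∂P) =
      -(∑ i, (F i - F' i) ^ 2 / (2 * ((1 - z)⁻¹ * G i ^ 2 + z⁻¹ * G' i ^ 2)))
      - ∑ i, ∫ x in (G i ^ 2)..(G' i ^ 2),
          (G' i ^ 2 - x) / (2 * x * ((1 - z)⁻¹ * x + z⁻¹ * G' i ^ 2)) := by
  subst hP hZ
  have hprod : ∀ y : Fin n → ℝ,
      (∏ i, gaussianPDFReal (F' i) ⟨G' i ^ 2, sq_nonneg (G' i)⟩ (y i) /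
        gaussianPDFReal (F i) ⟨G i ^ 2, sq_nonneg (G i)⟩ (y i)) ^ z =
      ∏ i, (gaussianPDFReal (F' i) ⟨G' i ^ 2, sq_nonneg (G' i)⟩ (y i) /
        gaussianPDFReal (F i) ⟨G i ^ 2, sq_nonneg (G i)⟩ (y i)) ^ z := by
    intro y
    exact (Real.finset_prod_rpow _ _ (fun i _ => div_nonneg (gaussianPDFReal_nonneg _ _ _)
      (gaussianPDFReal_nonneg _ _ _)) z).symm
  simp_rw [hprod]
  rw [aux_integral_pi_prod _ (fun i => by
      have := instIsProbabilityMeasureGaussianReal (F i) ⟨G i ^ 2, sq_nonneg (G i)⟩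
      infer_instance)
    (fun i => fun x => (gaussianPDFReal (F' i) ⟨G' i ^ 2, sq_nonneg (G' i)⟩ x /
        gaussianPDFReal (F i) ⟨G i ^ 2, sq_nonneg (G i)⟩ x) ^ z)]
  have heach : ∀ i : Fin n,
      ∫ x, (gaussianPDFReal (F' i) ⟨G' i ^ 2, sq_nonneg (G' i)⟩ x /
        gaussianPDFReal (F i) ⟨G i ^ 2, sq_nonneg (G i)⟩ x) ^ z
        ∂(gaussianReal (F i) ⟨G i ^ 2, sq_nonneg (G i)⟩) =
      Real.exp (-((F i - F' i) ^ 2 / (2 * ((1 - z)⁻¹ * G i ^ 2 + z⁻¹ * G' i ^ 2)))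
        - ∫ x in (G i ^ 2)..(G' i ^ 2),
            (G' i ^ 2 - x) / (2 * x * ((1 - z)⁻¹ * x + z⁻¹ * G' i ^ 2))) :=
    fun i => aux_oneDim (F i) (F' i) (G i) (G' i) z (hG i) (hG' i) hz0 hz1
  rw [Finset.prod_congr rfl (fun i _ => heach i), ← Real.exp_sum, Real.log_exp,
    Finset.sum_sub_distrib, Finset.sum_neg_distrib]
end

section
/- Let f : ℝ → ℝ be uniformly continuous and bounded, and for each n let 0 = t₀ⁿ < t₁ⁿ < ⋯ < tₙⁿ = Tₙ be a partition with Tₙ → ∞ and mesh hₙ = maxᵢ (tᵢⁿ − tᵢ₋₁ⁿ) → 0. Set Fᵢⁿ = ∫_{tᵢ₋₁ⁿ}^{tᵢⁿ} f(t) dt. Then (1/Tₙ) · | Σᵢ (Fᵢⁿ)²/(tᵢⁿ − tᵢ₋₁ⁿ) − ∫₀^{Tₙ} f(t)² dt | → 0 as n → ∞. -/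
open Filter

lemma block_bound (f : ℝ → ℝ) (hc : Continuous f) (C ε a b : ℝ) (hab : a < b)
    (hC : ∀ x, |f x| ≤ C)
    (hε : ∀ s ∈ Set.Icc a b, ∀ u ∈ Set.Icc a b, |f s - f u| ≤ ε) :
    |(∫ s in a..b, f s) ^ 2 / (b - a) - ∫ s in a..b, (f s) ^ 2| ≤ 2 * C * ε * (b - a) := by
  have hba : (0:ℝ) < b - a := by linarith
  have hC0 : 0 ≤ C := le_trans (abs_nonneg _) (hC a)
  have hε0 : 0 ≤ ε := le_trans (abs_nonneg _)
    (hε a ⟨le_refl _, le_of_lt hab⟩ a ⟨le_refl _, le_of_lt hab⟩)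
  set A := (∫ s in a..b, f s) / (b - a) with hA
  have hInt : ∫ s in a..b, f s = A * (b - a) := by rw [hA, div_mul_cancel₀ _ (ne_of_gt hba)]
  have huIoc : Set.uIoc a b ⊆ Set.Icc a b := by
    rw [Set.uIoc_of_le (le_of_lt hab)]
    exact Set.Ioc_subset_Icc_self
  have hAC : |A| ≤ C := by
    have h1 : ‖∫ s in a..b, f s‖ ≤ C * |b - a| := by
      apply intervalIntegral.norm_integral_le_of_norm_le_const
      intro x _
      exact hC x
    rw [hA, abs_div, abs_of_pos hba]
    rw [div_le_iff₀ hba]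
    calc |∫ s in a..b, f s| ≤ C * |b - a| := h1
      _ = C * (b - a) := by rw [abs_of_pos hba]
  have hAs : ∀ s ∈ Set.Icc a b, |f s - A| ≤ ε := by
    intro s hs
    have hint : ∫ u in a..b, (f s - f u) = (f s - A) * (b - a) := by
      rw [intervalIntegral.integral_sub (intervalIntegrable_const)
        (hc.intervalIntegrable _ _), intervalIntegral.integral_const, hInt]
      simp [smul_eq_mul]
      ring
    have h1 : ‖∫ u in a..b, (f s - f u)‖ ≤ ε * |b - a| := by
      apply intervalIntegral.norm_integral_le_of_norm_le_const
      intro x hx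
      exact hε s hs x (huIoc hx)
    rw [hint] at h1
    rw [Real.norm_eq_abs, abs_mul, abs_of_pos hba] at h1
    exact le_of_mul_le_mul_right h1 hba
  have hId : (∫ s in a..b, f s) ^ 2 / (b - a) - ∫ s in a..b, (f s) ^ 2
      = ∫ s in a..b, (A ^ 2 - (f s) ^ 2) := by
    rw [intervalIntegral.integral_sub (f := fun _ => A ^ 2) (g := fun s => (f s) ^ 2) (intervalIntegrable_const)
      ((hc.pow 2).intervalIntegrable _ _), intervalIntegral.integral_const, hInt,
      smul_eq_mul]
    field_simp
  rw [hId]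
  have h2 : ‖∫ s in a..b, (A ^ 2 - (f s) ^ 2)‖ ≤ (2 * C * ε) * |b - a| := by
    apply intervalIntegral.norm_integral_le_of_norm_le_const
    intro x hx
    have hx' := huIoc hx
    have : A ^ 2 - (f x) ^ 2 = (A + f x) * (A - f x) := by ring
    rw [Real.norm_eq_abs, this, abs_mul]
    have h3 : |A + f x| ≤ 2 * C := by
      calc |A + f x| ≤ |A| + |f x| := abs_add_le _ _
        _ ≤ C + C := add_le_add hAC (hC x)
        _ = 2 * C := by ring
    have h4 : |A - f x| ≤ ε := by rw [abs_sub_comm]; exact hAs x hx'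
    exact mul_le_mul h3 h4 (abs_nonneg _) (by linarith)
  rw [Real.norm_eq_abs, abs_of_pos hba] at h2
  exact h2

/-- For `f` uniformly continuous and bounded, and partitions
`0 = t₀ⁿ < ⋯ < tₙⁿ = Tₙ` with `Tₙ → ∞` and mesh `hₙ → 0`, setting
`Fᵢⁿ = ∫_{tᵢ₋₁ⁿ}^{tᵢⁿ} f`, one has
`(1/Tₙ)|Σᵢ (Fᵢⁿ)²/(tᵢⁿ−tᵢ₋₁ⁿ) − ∫₀^{Tₙ} f²| → 0`. -/
theorem stmt_18 (f : ℝ → ℝ) (hf : UniformContinuous f)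
    (C : ℝ) (hfb : ∀ x, |f x| ≤ C)
    (t : ℕ → ℕ → ℝ) (h : ℕ → ℝ)
    (ht0 : ∀ n, t n 0 = 0)
    (hmono : ∀ n, ∀ i < n, t n i < t n (i + 1))
    (hmesh : ∀ n, ∀ i < n, t n (i + 1) - t n i ≤ h n)
    (hmesh0 : Tendsto h atTop (nhds 0))
    (hT : Tendsto (fun n => t n n) atTop atTop) :
    Tendsto (fun n => (1 / t n n) *
      |(∑ i ∈ Finset.range n,
          (∫ s in (t n i)..(t n (i + 1)), f s) ^ 2 / (t n (i + 1) - t n i))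
        - ∫ s in (0:ℝ)..(t n n), (f s) ^ 2|) atTop (nhds 0) := by
  have hc : Continuous f := hf.continuous
  have hC0 : 0 ≤ C := le_trans (abs_nonneg _) (hfb 0)
  rw [NormedAddCommGroup.tendsto_nhds_zero]
  intro ε hε
  set ε₀ := ε / (4 * C + 2) with hε₀def
  have hε₀ : 0 < ε₀ := div_pos hε (by linarith)
  obtain ⟨δ, hδ, hδf⟩ := Metric.uniformContinuous_iff.mp hf ε₀ hε₀
  have h1 : ∀ᶠ n in atTop, h n < δ := hmesh0.eventually (gt_mem_nhds hδ)
  have h2 : ∀ᶠ n in atTop, 1 ≤ t n n := hT.eventually_ge_atTop 1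
  filter_upwards [h1, h2] with n hn1 hn2
  have hTpos : (0:ℝ) < t n n := lt_of_lt_of_le one_pos hn2
  have key : ∀ i ∈ Finset.range n,
      |(∫ s in t n i..t n (i + 1), f s) ^ 2 / (t n (i + 1) - t n i)
        - ∫ s in t n i..t n (i + 1), (f s) ^ 2| ≤ 2 * C * ε₀ * (t n (i + 1) - t n i) := by
    intro i hi
    rw [Finset.mem_range] at hi
    apply block_bound f hc C ε₀ _ _ (hmono n i hi) hfb
    intro s hs u hu
    have hd : |s - u| < δ := by
      have h3 := hmesh n i hi
      rcases hs with ⟨hs1, hs2⟩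
      rcases hu with ⟨hu1, hu2⟩
      have : h n < δ := hn1
      rw [abs_sub_lt_iff]
      constructor <;> linarith
    exact le_of_lt (by simpa [Real.dist_eq] using hδf hd)
  have hsplit : ∫ s in (0:ℝ)..(t n n), (f s) ^ 2
      = ∑ i ∈ Finset.range n, ∫ s in t n i..t n (i + 1), (f s) ^ 2 := by
    have := intervalIntegral.sum_integral_adjacent_intervals
      (μ := MeasureTheory.volume) (f := fun s => (f s) ^ 2) (a := t n) (n := n)
      (fun i _ => (hc.pow 2).intervalIntegrable _ _)
    rw [ht0 n] at this
    exact this.symm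
  have habs : |(∑ i ∈ Finset.range n,
      (∫ s in t n i..t n (i + 1), f s) ^ 2 / (t n (i + 1) - t n i))
        - ∫ s in (0:ℝ)..(t n n), (f s) ^ 2| ≤ 2 * C * ε₀ * t n n := by
    rw [hsplit, ← Finset.sum_sub_distrib]
    calc |∑ i ∈ Finset.range n,
          ((∫ s in t n i..t n (i + 1), f s) ^ 2 / (t n (i + 1) - t n i)
            - ∫ s in t n i..t n (i + 1), (f s) ^ 2)|
        ≤ ∑ i ∈ Finset.range n,
          |(∫ s in t n i..t n (i + 1), f s) ^ 2 / (t n (i + 1) - t n i)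
            - ∫ s in t n i..t n (i + 1), (f s) ^ 2| := Finset.abs_sum_le_sum_abs _ _
      _ ≤ ∑ i ∈ Finset.range n, 2 * C * ε₀ * (t n (i + 1) - t n i) :=
          Finset.sum_le_sum key
      _ = 2 * C * ε₀ * ∑ i ∈ Finset.range n, (t n (i + 1) - t n i) := by
          rw [Finset.mul_sum]
      _ = 2 * C * ε₀ * (t n n - t n 0) := by rw [Finset.sum_range_sub (f := t n)]
      _ = 2 * C * ε₀ * t n n := by rw [ht0 n]; ring
  have hval : (1 / t n n) * |(∑ i ∈ Finset.range n,
      (∫ s in t n i..t n (i + 1), f s) ^ 2 / (t n (i + 1) - t n i))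
        - ∫ s in (0:ℝ)..(t n n), (f s) ^ 2| ≤ 2 * C * ε₀ := by
    rw [div_mul_eq_mul_div, one_mul, div_le_iff₀ hTpos]
    calc _ ≤ 2 * C * ε₀ * t n n := habs
      _ = 2 * C * ε₀ * t n n := rfl
  have hfin : 2 * C * ε₀ < ε := by
    have hpos : (0:ℝ) < 4 * C + 2 := by linarith
    have heq : 2 * C * ε₀ = (2 * C * ε) / (4 * C + 2) := by rw [hε₀def]; ring
    rw [heq, div_lt_iff₀ hpos]
    nlinarith
  have hnn : 0 ≤ (1 / t n n) * |(∑ i ∈ Finset.range n,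
      (∫ s in t n i..t n (i + 1), f s) ^ 2 / (t n (i + 1) - t n i))
        - ∫ s in (0:ℝ)..(t n n), (f s) ^ 2| :=
    mul_nonneg (by positivity) (abs_nonneg _)
  rw [Real.norm_eq_abs, abs_of_nonneg hnn]
  exact lt_of_le_of_lt hval hfin
end
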